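/- arXiv:1606.04430 — 5 statements merged into one kernel-verified Lean document; each statement's English description precedes it below -/
import Mathlib

section
/- The IF density f_p(x) = (b q / c) ((x-x₀)/c)^{b-1} G_p(x)^{-q-1} (1 - (1/(p+1)) G_p(x)^{-q})^p with G_p(x) = (p+1)^{-1/q} + ((x-x₀)/c)^b integrates to 1 over [x₀, ∞), for all p, b, c, q > 0 and x₀ ≥ 0. -/
open Real Filter Set MeasureTheory
open scoped Topology

/-- The IF density integrates to 1 over `[x₀, ∞)` for all `p, b, c, q > 0`, `x₀ ≥ 0`. -/
theorem IF_density_integral_eq_one (p b c q x₀ : ℝ) (hp : 0 < p) (hb : 0 < b)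
    (hc : 0 < c) (hq : 0 < q) (hx₀ : 0 ≤ x₀) :
    let G : ℝ → ℝ := fun t => (p + 1) ^ (-(1 / q)) + ((t - x₀) / c) ^ b
    (∫ x in Ici x₀, (b * q / c) * ((x - x₀) / c) ^ (b - 1) * (G x) ^ (-q - 1) *
      (1 - (1 / (p + 1)) * (G x) ^ (-q)) ^ p) = 1 := by
  intro G
  have hp1 : (0:ℝ) < p + 1 := by linarith
  have hbase : (0:ℝ) < (p + 1) ^ (-(1 / q)) := rpow_pos_of_pos hp1 _
  -- positivity of G on Ici x₀
  have hGpos : ∀ x, x₀ ≤ x → 0 < G x := by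
    intro x hx
    have : (0:ℝ) ≤ ((x - x₀) / c) ^ b :=
      rpow_nonneg (div_nonneg (by linarith) hc.le) _
    simp only [G]; linarith
  -- G x ^ (-q) ≤ p + 1 on Ici, with strict inequality on Ioi
  have hGxq : ∀ x, x₀ < x → G x ^ (-q) < p + 1 := by
    intro x hx
    have hs : (0:ℝ) < (x - x₀) / c := div_pos (by linarith) hc
    have hsb : (0:ℝ) < ((x - x₀) / c) ^ b := rpow_pos_of_pos hs _
    have hlt : (p + 1) ^ (-(1 / q)) < G x := by simp only [G]; linarith
    have := Real.rpow_lt_rpow_of_neg hbase hlt (neg_neg_iff_pos.mpr hq : -q < 0)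
    calc G x ^ (-q) < ((p + 1) ^ (-(1 / q))) ^ (-q) := this
      _ = (p + 1) ^ ((-(1 / q)) * (-q)) := (Real.rpow_mul hp1.le _ _).symm
      _ = p + 1 := by
          rw [show (-(1 / q)) * (-q) = (1:ℝ) by field_simp, Real.rpow_one]
  have hGxq_x0 : G x₀ ^ (-q) = p + 1 := by
    have : G x₀ = (p + 1) ^ (-(1 / q)) := by
      simp only [G, sub_self, zero_div, Real.zero_rpow hb.ne', add_zero]
    rw [this, ← Real.rpow_mul hp1.le,
      show (-(1 / q)) * (-q) = (1:ℝ) by field_simp, Real.rpow_one]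
  -- the antiderivative
  set F : ℝ → ℝ := fun x => (1 - (1 / (p + 1)) * G x ^ (-q)) ^ (p + 1) with hFdef
  have hFx0 : F x₀ = 0 := by
    simp only [F, hGxq_x0]
    rw [show 1 - 1 / (p + 1) * (p + 1) = (0:ℝ) by field_simp; ring, Real.zero_rpow hp1.ne']
  -- derivative of G
  have hGderiv : ∀ x, x₀ < x →
      HasDerivAt G (1 / c * b * ((x - x₀) / c) ^ (b - 1)) x := by
    intro x hx
    have hs : (0:ℝ) < (x - x₀) / c := div_pos (by linarith) hc
    have h1 : HasDerivAt (fun t : ℝ => (t - x₀) / c) (1 / c) x := by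
      simpa using ((hasDerivAt_id x).sub_const x₀).div_const c
    have h2 : HasDerivAt (fun t : ℝ => ((t - x₀) / c) ^ b)
        (1 / c * b * ((x - x₀) / c) ^ (b - 1)) x := h1.rpow_const (Or.inl hs.ne')
    exact h2.const_add _
  -- derivative of F
  have hFderiv : ∀ x, x₀ < x →
      HasDerivAt F ((b * q / c) * ((x - x₀) / c) ^ (b - 1) * (G x) ^ (-q - 1) *
        (1 - (1 / (p + 1)) * (G x) ^ (-q)) ^ p) x := by
    intro x hx
    have hGx : 0 < G x := hGpos x hx.le
    have hhx : 0 < 1 - (1 / (p + 1)) * G x ^ (-q) := by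
      have := hGxq x hx
      have h1 : (1 / (p + 1)) * G x ^ (-q) < (1 / (p + 1)) * (p + 1) :=
        mul_lt_mul_of_pos_left this (by positivity)
      have h2 : (1 / (p + 1)) * (p + 1) = (1:ℝ) := by field_simp
      linarith
    have hv : HasDerivAt (fun t => G t ^ (-q))
        (1 / c * b * ((x - x₀) / c) ^ (b - 1) * (-q) * G x ^ (-q - 1)) x :=
      (hGderiv x hx).rpow_const (Or.inl hGx.ne')
    have hh : HasDerivAt (fun t => 1 - (1 / (p + 1)) * G t ^ (-q))
        (-((1 / (p + 1)) * (1 / c * b * ((x - x₀) / c) ^ (b - 1) * (-q) * G x ^ (-q - 1)))) x :=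
      (hv.const_mul _).const_sub 1
    have hF : HasDerivAt F
        (-((1 / (p + 1)) * (1 / c * b * ((x - x₀) / c) ^ (b - 1) * (-q) * G x ^ (-q - 1))) *
          (p + 1) * (1 - (1 / (p + 1)) * G x ^ (-q)) ^ (p + 1 - 1)) x :=
      hh.rpow_const (Or.inl hhx.ne')
    convert hF using 1
    rw [show p + 1 - 1 = p by ring]
    field_simp
  -- nonnegativity
  have hnonneg : ∀ x ∈ Ioi x₀, 0 ≤ (b * q / c) * ((x - x₀) / c) ^ (b - 1) * (G x) ^ (-q - 1) *
      (1 - (1 / (p + 1)) * (G x) ^ (-q)) ^ p := by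
    intro x hx
    have hx' : x₀ < x := hx
    have hhx : 0 ≤ 1 - (1 / (p + 1)) * G x ^ (-q) := by
      have := hGxq x hx'
      have h1 : (1 / (p + 1)) * G x ^ (-q) ≤ (1 / (p + 1)) * (p + 1) :=
        mul_le_mul_of_nonneg_left this.le (by positivity)
      have h2 : (1 / (p + 1)) * (p + 1) = (1:ℝ) := by field_simp
      linarith
    have h1 : (0:ℝ) ≤ ((x - x₀) / c) ^ (b - 1) :=
      rpow_nonneg (div_nonneg (by linarith) hc.le) _
    have h2 : (0:ℝ) ≤ G x ^ (-q - 1) := rpow_nonneg (hGpos x hx'.le).le _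
    have h3 : (0:ℝ) ≤ (1 - (1 / (p + 1)) * G x ^ (-q)) ^ p := rpow_nonneg hhx _
    positivity
  -- continuity of F at x₀ within Ici x₀
  have hGcont : Continuous G := by
    have : Continuous fun t : ℝ => ((t - x₀) / c) ^ b := by
      apply Continuous.rpow_const (by continuity)
      intro x; exact Or.inr hb.le
    exact continuous_const.add this
  have hFcont : ContinuousWithinAt F (Ici x₀) x₀ := by
    apply ContinuousAt.continuousWithinAt
    have h1 : ContinuousAt (fun t => G t ^ (-q)) x₀ :=
      (hGcont.continuousAt).rpow_const (Or.inl (hGpos x₀ le_rfl).ne')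
    have h2 : ContinuousAt (fun t => 1 - (1 / (p + 1)) * G t ^ (-q)) x₀ :=
      continuousAt_const.sub (continuousAt_const.mul h1)
    exact h2.rpow_const (Or.inr hp1.le)
  -- limit of F at infinity
  have hFtendsto : Tendsto F atTop (𝓝 1) := by
    have hG : Tendsto G atTop atTop := by
      apply tendsto_atTop_add_const_left
      have h0 : Tendsto (fun t : ℝ => (t - x₀) / c) atTop atTop :=
        (tendsto_atTop_add_const_right _ (-x₀) tendsto_id).atTop_div_const hc |>.congr
          (by intro t; simp only [id_eq]; ring)
      exact (tendsto_rpow_atTop hb).comp h0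
    have hv : Tendsto (fun t => G t ^ (-q)) atTop (𝓝 0) :=
      (tendsto_rpow_neg_atTop hq).comp hG
    have hh : Tendsto (fun t => 1 - (1 / (p + 1)) * G t ^ (-q)) atTop (𝓝 1) := by
      have := (hv.const_mul (1 / (p + 1))).const_sub 1
      simpa using this
    have hc1 : ContinuousAt (fun y : ℝ => y ^ (p + 1)) 1 :=
      Real.continuousAt_rpow_const 1 (p + 1) (Or.inl one_ne_zero)
    have := hc1.tendsto.comp hh
    simpa [hFdef, Function.comp_def, Real.one_rpow, one_div] using this
  rw [MeasureTheory.integral_Ici_eq_integral_Ioi]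
  rw [integral_Ioi_of_hasDerivAt_of_nonneg hFcont (fun x hx => hFderiv x hx) hnonneg hFtendsto]
  rw [hFx0]; ring
end

section
/- For x₀ ≥ 0, c > 0, b > 0, q > 0 fixed and any x > x₀, the IF density f_p(x) converges as p → ∞ to the power law with exponential cut-off density f_∞(x) = (b q / c) ((x-x₀)/c)^{-bq-1} · exp(-((x-x₀)/c)^{-bq}). -/
open Real Filter Set

set_option maxHeartbeats 1000000

/-- For fixed `x₀ ≥ 0`, `b, c, q > 0` and `x > x₀`, the IF density `f_p(x)` converges,
as `p → ∞`, to the power law with exponential cut-off density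
`(bq/c)((x-x₀)/c)^{b-1}((x-x₀)/c)^{b(-q-1)} exp(-((x-x₀)/c)^{-bq})`. -/
theorem IF_density_tendsto_cutoff (b c q x₀ : ℝ) (hb : 0 < b) (hc : 0 < c)
    (hq : 0 < q) (hx₀ : 0 ≤ x₀) (x : ℝ) (hx : x₀ < x) :
    Tendsto (fun p : ℝ =>
        (b * q / c) * ((x - x₀) / c) ^ (b - 1) *
          ((p + 1) ^ (-(1 / q)) + ((x - x₀) / c) ^ b) ^ (-q - 1) *
          (1 - (1 / (p + 1)) * ((p + 1) ^ (-(1 / q)) + ((x - x₀) / c) ^ b) ^ (-q)) ^ p)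
      atTop
      (nhds ((b * q / c) * ((x - x₀) / c) ^ (b - 1) * ((x - x₀) / c) ^ (b * (-q - 1)) *
        Real.exp (-((x - x₀) / c) ^ (-(b * q))))) := by
  set z : ℝ := (x - x₀) / c with hzdef
  have hz0 : 0 < z := div_pos (by linarith) hc
  set y : ℝ := z ^ b with hydef
  have hy0 : 0 < y := Real.rpow_pos_of_pos hz0 b
  set G : ℝ → ℝ := fun p => (p + 1) ^ (-(1 / q)) + y with hGdef
  -- G tends to y
  have hG : Tendsto G atTop (nhds y) := by
    have h1 : Tendsto (fun p : ℝ => (p + 1) ^ (-(1 / q))) atTop (nhds 0) :=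
      (tendsto_rpow_neg_atTop (by positivity)).comp
        (tendsto_atTop_add_const_right _ 1 tendsto_id)
    have h2 := h1.add (tendsto_const_nhds : Tendsto (fun _ : ℝ => y) atTop (nhds y))
    rw [zero_add] at h2
    exact h2
  have hGpos : ∀ p : ℝ, 0 ≤ p → 0 < G p := fun p hp => by
    have : (0:ℝ) < (p + 1) ^ (-(1/q)) := Real.rpow_pos_of_pos (by linarith) _
    simp only [hGdef]; linarith
  -- G^(-q) tends to y^(-q)
  have hGq : Tendsto (fun p => (G p) ^ (-q)) atTop (nhds (y ^ (-q))) :=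
    hG.rpow_const (Or.inl hy0.ne')
  have hGq1 : Tendsto (fun p => (G p) ^ (-q - 1)) atTop (nhds (y ^ (-q - 1))) :=
    hG.rpow_const (Or.inl hy0.ne')
  set u : ℝ → ℝ := fun p => (1 / (p + 1)) * (G p) ^ (-q) with hudef
  have hinv : Tendsto (fun p : ℝ => 1 / (p + 1)) atTop (nhds 0) := by
    exact (tendsto_inv_atTop_zero.comp
      (tendsto_atTop_add_const_right atTop 1 tendsto_id)).congr fun p => (one_div _).symm
  have hu0 : Tendsto u atTop (nhds 0) := by
    have h := hinv.mul hGq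
    rw [zero_mul] at h
    exact h
  have hupos : ∀ᶠ p : ℝ in atTop, 0 < u p := by
    filter_upwards [eventually_ge_atTop (0:ℝ)] with p hp
    have h1 : (0:ℝ) < 1 / (p + 1) := by positivity
    exact mul_pos h1 (Real.rpow_pos_of_pos (hGpos p hp) _)
  have husmall : ∀ᶠ p : ℝ in atTop, u p < 1 := by
    have := hu0.eventually (eventually_lt_nhds (show (0:ℝ) < 1 by norm_num))
    exact this
  -- p * u p tends to y^(-q)
  have hpfrac : Tendsto (fun p : ℝ => p / (p + 1)) atTop (nhds 1) := by
    have h := hinv.const_sub 1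
    rw [sub_zero] at h
    apply h.congr'
    filter_upwards [eventually_gt_atTop (0:ℝ)] with p hp
    field_simp
    ring
  have hpu : Tendsto (fun p => p * u p) atTop (nhds (y ^ (-q))) := by
    have := hpfrac.mul hGq
    rw [one_mul] at this
    apply this.congr
    intro p
    simp only [hudef]; ring
  -- slope of log
  have hslope : Tendsto (fun p => Real.log (1 - u p) / (-(u p))) atTop (nhds 1) := by
    have hd : HasDerivAt Real.log 1 1 := by
      simpa using Real.hasDerivAt_log one_ne_zero
    have hsl := hasDerivAt_iff_tendsto_slope.mp hd
    have h1u : Tendsto (fun p => 1 - u p) atTop (nhdsWithin 1 {(1:ℝ)}ᶜ) := by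
      rw [tendsto_nhdsWithin_iff]
      constructor
      · simpa using (tendsto_const_nhds.sub hu0)
      · filter_upwards [hupos] with p hp
        simp only [Set.mem_compl_iff, Set.mem_singleton_iff]
        intro h
        nlinarith
    have := hsl.comp h1u
    apply this.congr
    intro p
    simp [slope_def_field, Real.log_one]
  -- p * log (1 - u p) tends to -(y^(-q))
  have hlog : Tendsto (fun p => p * Real.log (1 - u p)) atTop (nhds (-(y ^ (-q)))) := by
    have h := (hpu.neg).mul hslope
    rw [mul_one] at h
    apply h.congr'
    filter_upwards [hupos] with p hp
    field_simp
  -- last factor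
  have hF : Tendsto (fun p => (1 - u p) ^ p) atTop (nhds (Real.exp (-(y ^ (-q))))) := by
    have h := (Real.continuous_exp.tendsto _).comp hlog
    apply h.congr'
    filter_upwards [hupos, husmall] with p hp1 hp2
    have : (0:ℝ) < 1 - u p := by linarith
    rw [Function.comp_apply, Real.rpow_def_of_pos this, mul_comm]
  -- combine
  have e1 : z ^ (b * (-q - 1)) = y ^ (-q - 1) := by
    rw [hydef, Real.rpow_mul hz0.le]
  have e2 : z ^ (-(b * q)) = y ^ (-q) := by
    rw [show -(b * q) = b * (-q) by ring, Real.rpow_mul hz0.le, hydef]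
  rw [e1, e2]
  exact (tendsto_const_nhds.mul hGq1).mul hF
end

section
/- For x₀ ≥ 0, c > 0, b > 0, q > 0 fixed and any x > x₀, the IF density f_p(x) converges as p → 0⁺ to the power law density f_0(x) = (b q / c) ((x-x₀)/c)^{b-1} (1 + ((x-x₀)/c)^b)^{-q-1}. -/
open Real Filter Set

/-- For fixed `x₀ ≥ 0`, `b, c, q > 0` and `x > x₀`, the IF density `f_p(x)` converges,
as `p → 0⁺`, to the power law density
`f_0(x) = (bq/c)((x-x₀)/c)^{b-1}(1 + ((x-x₀)/c)^b)^{-q-1}`. -/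
theorem IF_density_tendsto_powerlaw (b c q x₀ : ℝ) (hb : 0 < b) (hc : 0 < c)
    (hq : 0 < q) (hx₀ : 0 ≤ x₀) (x : ℝ) (hx : x₀ < x) :
    Tendsto (fun p : ℝ =>
        (b * q / c) * ((x - x₀) / c) ^ (b - 1) *
          ((p + 1) ^ (-(1 / q)) + ((x - x₀) / c) ^ b) ^ (-q - 1) *
          (1 - (1 / (p + 1)) * ((p + 1) ^ (-(1 / q)) + ((x - x₀) / c) ^ b) ^ (-q)) ^ p)
      (nhdsWithin 0 (Ioi 0))
      (nhds ((b * q / c) * ((x - x₀) / c) ^ (b - 1) *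
        (1 + ((x - x₀) / c) ^ b) ^ (-q - 1))) := by
  set t : ℝ := ((x - x₀) / c) ^ b with ht
  have ht0 : 0 < t := Real.rpow_pos_of_pos (div_pos (sub_pos.mpr hx) hc) b
  -- continuity of p ↦ (p+1)^(-(1/q))
  have hA : ContinuousAt (fun p : ℝ => (p + 1) ^ (-(1 / q)) + t) 0 := by
    exact ((continuousAt_id.add continuousAt_const).rpow_const
      (Or.inl (by norm_num))).add continuousAt_const
  have hA0 : (fun p : ℝ => (p + 1) ^ (-(1 / q)) + t) 0 = 1 + t := by
    simp [Real.one_rpow]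
  have hA0pos : (0:ℝ) < 1 + t := by linarith
  have hmain : ContinuousAt (fun p : ℝ =>
      (b * q / c) * ((x - x₀) / c) ^ (b - 1) *
        ((p + 1) ^ (-(1 / q)) + t) ^ (-q - 1) *
        (1 - (1 / (p + 1)) * ((p + 1) ^ (-(1 / q)) + t) ^ (-q)) ^ p) 0 := by
    have h2 : ContinuousAt (fun p : ℝ =>
        ((p + 1) ^ (-(1 / q)) + t) ^ (-q - 1)) 0 := by
      refine hA.rpow_const (Or.inl ?_)
      simp only [zero_add, Real.one_rpow]; positivity
    have hB : ContinuousAt (fun p : ℝ =>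
        1 - (1 / (p + 1)) * ((p + 1) ^ (-(1 / q)) + t) ^ (-q)) 0 := by
      refine continuousAt_const.sub (ContinuousAt.mul ?_ ?_)
      · exact continuousAt_const.div (continuousAt_id.add continuousAt_const)
          (by norm_num)
      · refine hA.rpow_const (Or.inl ?_)
        simp only [zero_add, Real.one_rpow]; positivity
    have hB0 : (0:ℝ) < 1 - (1 / ((0:ℝ) + 1)) * (((0:ℝ) + 1) ^ (-(1 / q)) + t) ^ (-q) := by
      have h1 : (1 + t) ^ (-q) < 1 :=
        Real.rpow_lt_one_of_one_lt_of_neg (by linarith) (by linarith)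
      simp only [zero_add, Real.one_rpow, div_one, one_mul]
      linarith
    have h3 : ContinuousAt (fun p : ℝ =>
        (1 - (1 / (p + 1)) * ((p + 1) ^ (-(1 / q)) + t) ^ (-q)) ^ p) 0 := by
      exact ContinuousAt.rpow hB continuousAt_id (Or.inl (ne_of_gt hB0))
    exact (continuousAt_const.mul h2).mul h3
  have h := hmain.tendsto.mono_left (nhdsWithin_le_nhds (s := Ioi (0:ℝ)))
  simpa [zero_add, Real.one_rpow, Real.rpow_zero, mul_one] using h
end

section
/- The median of the IF distribution with b > 0 and 0 < p < ∞ equals x₀ + c(p+1)^{-1/(bq)}((1 - 2^{-1/(p+1)})^{-1/q} - 1)^{1/b}, i.e., F_p evaluated at this point equals 1/2. -/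
open Real Filter Set

/-- The median of the IF distribution with `b > 0` and `0 < p < ∞` is
`x₀ + c(p+1)^{-1/(bq)}((1 - 2^{-1/(p+1)})^{-1/q} - 1)^{1/b}`: `F_p` there equals `1/2`. -/
theorem IF_median (p b c q x₀ : ℝ) (hp : 0 < p) (hb : 0 < b) (hc : 0 < c)
    (hq : 0 < q) (hx₀ : 0 ≤ x₀) :
    let G : ℝ → ℝ := fun x => (p + 1) ^ (-(1 / q)) + ((x - x₀) / c) ^ b
    let F : ℝ → ℝ := fun x => (1 - (1 / (p + 1)) * (G x) ^ (-q)) ^ (p + 1)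
    F (x₀ + c * (p + 1) ^ (-(1 / (b * q))) *
        ((1 - (2 : ℝ) ^ (-(1 / (p + 1)))) ^ (-(1 / q)) - 1) ^ (1 / b)) = 1 / 2 := by
  intro G F
  have hp1 : (0:ℝ) < p + 1 := by linarith
  set t : ℝ := (2:ℝ) ^ (-(1 / (p + 1))) with ht
  have ht0 : 0 < t := rpow_pos_of_pos (by norm_num) _
  have ht1 : t < 1 := by
    apply rpow_lt_one_of_one_lt_of_neg (by norm_num)
    have : 0 < 1 / (p + 1) := by positivity
    linarith
  set s : ℝ := 1 - t with hs
  have hs0 : 0 < s := by simp [hs]; linarith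
  have hs1 : s < 1 := by simp [hs]; linarith
  set A : ℝ := s ^ (-(1 / q)) - 1 with hA
  have hA0 : 0 < A := by
    have : 1 < s ^ (-(1 / q)) := by
      apply one_lt_rpow_of_pos_of_lt_one_of_neg hs0 hs1
      have : 0 < 1 / q := by positivity
      linarith
    simp only [hA]; linarith
  have hxsub : (x₀ + c * (p + 1) ^ (-(1 / (b * q))) * A ^ (1 / b) - x₀) / c
      = (p + 1) ^ (-(1 / (b * q))) * A ^ (1 / b) := by
    field_simp
    ring
  have hpow : ((p + 1) ^ (-(1 / (b * q))) * A ^ (1 / b)) ^ b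
      = (p + 1) ^ (-(1 / q)) * A := by
    rw [mul_rpow (by positivity) (by positivity),
      ← Real.rpow_mul hp1.le, ← Real.rpow_mul hA0.le]
    congr 1
    · congr 1
      field_simp
    · rw [one_div_mul_cancel hb.ne', Real.rpow_one]
  have hG : G (x₀ + c * (p + 1) ^ (-(1 / (b * q))) * A ^ (1 / b))
      = (p + 1) ^ (-(1 / q)) * s ^ (-(1 / q)) := by
    show (p + 1) ^ (-(1 / q)) + ((_ - x₀) / c) ^ b = _
    rw [hxsub, hpow, hA]
    ring
  have hGq : ((p + 1) ^ (-(1 / q)) * s ^ (-(1 / q))) ^ (-q) = (p + 1) * s := by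
    rw [mul_rpow (by positivity) (by positivity),
      ← Real.rpow_mul hp1.le, ← Real.rpow_mul hs0.le]
    have : -(1 / q) * -q = 1 := by field_simp
    rw [this, Real.rpow_one, Real.rpow_one]
  show (1 - 1 / (p + 1) * (G _) ^ (-q)) ^ (p + 1) = 1 / 2
  rw [hG, hGq]
  have : 1 - 1 / (p + 1) * ((p + 1) * s) = t := by
    field_simp [hs]
    linarith
  rw [this, ht, ← Real.rpow_mul (by norm_num : (0:ℝ) ≤ 2)]
  rw [neg_mul, one_div_mul_cancel hp1.ne']
  norm_num
end

section
/- If X has the IF3 density f_{p,1}(x) = (q/c)((p+1)^{-1/q} + (x-x₀)/c)^{-q-1}(1 - (1/(p+1))((p+1)^{-1/q} + (x-x₀)/c)^{-q})^p on [x₀, ∞) with q > 1, then E[X] = x₀ + c(p+1)^{1-1/q}(B(1 - 1/q, p+1) - 1/(p+1)). -/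
open Real Filter Set MeasureTheory

lemma realBeta_ofReal {a b x : ℝ} (hx0 : 0 ≤ x) (hx1 : 0 ≤ 1 - x) :
    (x:ℂ) ^ ((a:ℂ) - 1) * ((1:ℂ) - (x:ℂ)) ^ ((b:ℂ) - 1)
      = ((x ^ (a - 1) * (1 - x) ^ (b - 1) : ℝ) : ℂ) := by
  push_cast [Complex.ofReal_cpow hx0, Complex.ofReal_cpow hx1]
  ring

lemma realBeta_integrableOn {a b : ℝ} (ha : 0 < a) (hb : 0 < b) :
    IntegrableOn (fun x : ℝ => x ^ (a - 1) * (1 - x) ^ (b - 1)) (Ioo 0 1) := by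
  have hC : IntegrableOn (fun x : ℝ => (x : ℂ) ^ ((a : ℂ) - 1) * ((1 : ℂ) - x) ^ ((b : ℂ) - 1))
      (Ioc 0 1) := (Complex.betaIntegral_convergent (by simpa using ha) (by simpa using hb)).1
  have hre := (hC.mono_set Ioo_subset_Ioc_self).re
  refine IntegrableOn.congr_fun hre ?_ measurableSet_Ioo
  intro x hx
  have hx0 : (0:ℝ) ≤ x := hx.1.le
  have hx1 : (0:ℝ) ≤ 1 - x := by linarith [hx.2]
  simp [realBeta_ofReal hx0 hx1]

lemma realBeta_eq {a b : ℝ} (ha : 0 < a) (hb : 0 < b) :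
    ∫ x in Ioo (0:ℝ) 1, x ^ (a - 1) * (1 - x) ^ (b - 1)
      = Real.Gamma a * Real.Gamma b / Real.Gamma (a + b) := by
  have key := Complex.Gamma_mul_Gamma_eq_betaIntegral
    (s := (a : ℂ)) (t := (b : ℂ)) (by simpa using ha) (by simpa using hb)
  have hbeta : Complex.betaIntegral a b
      = ((∫ x in (0:ℝ)..1, x ^ (a - 1) * (1 - x) ^ (b - 1) : ℝ) : ℂ) := by
    rw [Complex.betaIntegral, ← intervalIntegral.integral_ofReal]
    refine intervalIntegral.integral_congr fun x hx => ?_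
    rw [uIcc_of_le (by norm_num)] at hx
    exact realBeta_ofReal hx.1 (by linarith [hx.2])
  rw [hbeta, Complex.Gamma_ofReal, Complex.Gamma_ofReal, show ((a:ℂ) + b) = ((a+b : ℝ) : ℂ) by
    push_cast; ring, Complex.Gamma_ofReal] at key
  have key2 : Real.Gamma a * Real.Gamma b
      = Real.Gamma (a + b) * ∫ x in (0:ℝ)..1, x ^ (a - 1) * (1 - x) ^ (b - 1) := by
    exact_mod_cast key
  have hG : Real.Gamma (a + b) ≠ 0 := (Real.Gamma_pos_of_pos (by linarith)).ne'
  rw [← integral_Ioc_eq_integral_Ioo,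
    ← intervalIntegral.integral_of_le (by norm_num : (0:ℝ) ≤ 1)]
  field_simp [mul_comm] at key2 ⊢
  linarith [key2]

lemma IF3_aux (p c q x₀ : ℝ) (hp : 0 < p) (hc : 0 < c) (hq : 1 < q) (hx₀ : 0 ≤ x₀) :
    (∫ x in Ici x₀,
        x * ((q / c) * ((p + 1) ^ (-(1 / q)) + (x - x₀) / c) ^ (-q - 1) *
          (1 - (1 / (p + 1)) * ((p + 1) ^ (-(1 / q)) + (x - x₀) / c) ^ (-q)) ^ p))
      = x₀ + c * (p + 1) ^ (1 - 1 / q) *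
          (Real.Gamma (1 - 1 / q) * Real.Gamma (p + 1) / Real.Gamma ((1 - 1 / q) + (p + 1))
            - 1 / (p + 1)) := by
  have hp1 : (0:ℝ) < p + 1 := by linarith
  have hq0 : (0:ℝ) < q := by linarith
  set a : ℝ := (p + 1) ^ (-(1 / q)) with hadef
  have ha : 0 < a := rpow_pos_of_pos hp1 _
  have hca : 0 < c * a := mul_pos hc ha
  have ha_q : a ^ (-q) = p + 1 := by
    rw [hadef, ← Real.rpow_mul hp1.le, show (-(1/q)) * (-q) = 1 by field_simp, Real.rpow_one]
  have ha_q1 : a * a ^ (-q - 1) = p + 1 := by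
    rw [← ha_q]
    nth_rewrite 1 [← Real.rpow_one a]
    rw [← Real.rpow_add ha]
    norm_num
  -- the substitution
  set F : ℝ → ℝ := fun u => x₀ + c * a * ((1 - u) ^ (-(1/q)) - 1) with hFdef
  set F' : ℝ → ℝ := fun u => c * a * (1/q) * (1 - u) ^ (-(1/q) - 1) with hF'def
  have hderiv : ∀ u ∈ Ioo (0:ℝ) 1, HasDerivWithinAt F (F' u) (Ioo 0 1) u := by
    intro u hu
    have h1u : (0:ℝ) < 1 - u := by linarith [hu.2]
    have h0 : HasDerivAt (fun u : ℝ => 1 - u) (-1) u := by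
      simpa using (hasDerivAt_id u).const_sub 1
    have hd : HasDerivAt (fun u : ℝ => (1 - u) ^ (-(1/q)))
        ((-(1/q)) * (1 - u) ^ (-(1/q) - 1) * (-1)) u :=
      (Real.hasDerivAt_rpow_const (Or.inl h1u.ne')).comp u h0
    have := ((hd.sub_const 1).const_mul (c * a)).const_add x₀
    have heq : F' u = c * a * ((-(1/q)) * (1 - u) ^ (-(1/q) - 1) * (-1)) := by
      rw [hF'def]; ring
    rw [heq]
    exact this.hasDerivWithinAt
  have hmono : StrictMonoOn F (Ioo 0 1) := by
    intro u hu v hv huv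
    have h1v : (0:ℝ) < 1 - v := by linarith [hv.2]
    have hlt : (1 - u) ^ (-(1/q)) < (1 - v) ^ (-(1/q)) :=
      Real.rpow_lt_rpow_of_neg h1v (by linarith) (by
        simp only [neg_neg, neg_lt, neg_zero]; positivity)
    simp only [hFdef]
    nlinarith
  have himg : F '' Ioo 0 1 = Ioi x₀ := by
    ext x
    constructor
    · rintro ⟨u, hu, rfl⟩
      have h1u : (0:ℝ) < 1 - u := by linarith [hu.2]
      have h1 : 1 < (1 - u) ^ (-(1/q)) := by
        rw [Real.one_lt_rpow_iff_of_pos h1u]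
        right
        constructor
        · linarith [hu.1]
        · simp only [neg_neg, neg_lt, neg_zero]; positivity
      simp only [hFdef, mem_Ioi]
      nlinarith
    · intro hx
      have hx' : x₀ < x := hx
      set t : ℝ := (x - x₀) / (c * a) + 1 with htdef
      have ht1 : 1 < t := by
        have : 0 < (x - x₀) / (c * a) := div_pos (by linarith) hca
        rw [htdef]; linarith
      have ht0 : (0:ℝ) < t := by linarith
      refine ⟨1 - t ^ (-q), ⟨?_, ?_⟩, ?_⟩
      · have : t ^ (-q) < 1 := Real.rpow_lt_one_of_one_lt_of_neg ht1 (by linarith)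
        linarith
      · have : 0 < t ^ (-q) := rpow_pos_of_pos ht0 _
        linarith
      · show x₀ + c * a * ((1 - (1 - t ^ (-q))) ^ (-(1/q)) - 1) = x
        rw [show (1:ℝ) - (1 - t ^ (-q)) = t ^ (-q) by ring, ← Real.rpow_mul ht0.le,
          show (-q) * (-(1/q)) = 1 by field_simp, Real.rpow_one]
        rw [htdef]
        field_simp
        ring
  -- pointwise identity
  have h_point : ∀ u ∈ Ioo (0:ℝ) 1,
      |F' u| • (F u * ((q / c) * (a + (F u - x₀) / c) ^ (-q - 1) *
          (1 - (1 / (p + 1)) * (a + (F u - x₀) / c) ^ (-q)) ^ p))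
        = (x₀ - c * a) * (p + 1) * u ^ p
            + (c * a * (p + 1)) * (u ^ p * (1 - u) ^ (-(1/q))) := by
    intro u hu
    have h1u : (0:ℝ) < 1 - u := by linarith [hu.2]
    have hu0 : (0:ℝ) < u := hu.1
    have hs : (0:ℝ) < (1 - u) ^ (-(1/q)) := rpow_pos_of_pos h1u _
    have hH : a + (F u - x₀) / c = a * (1 - u) ^ (-(1/q)) := by
      rw [hFdef]
      field_simp
      ring
    have key1 : ((1 - u) ^ (-(1/q))) ^ (-q) = 1 - u := by
      rw [← Real.rpow_mul h1u.le, show (-(1/q)) * (-q) = 1 by field_simp, Real.rpow_one]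
    have hHq : (a * (1 - u) ^ (-(1/q))) ^ (-q) = (p + 1) * (1 - u) := by
      rw [Real.mul_rpow ha.le hs.le, ha_q, key1]
    have hone : 1 - (1 / (p + 1)) * ((a * (1 - u) ^ (-(1/q))) ^ (-q)) = u := by
      rw [hHq]; field_simp; ring
    have hHq1 : (a * (1 - u) ^ (-(1/q))) ^ (-q - 1)
        = a ^ (-q - 1) * (1 - u) ^ ((-(1/q)) * (-q - 1)) := by
      rw [Real.mul_rpow ha.le hs.le, ← Real.rpow_mul h1u.le]
    have hF'pos : 0 < F' u := by
      rw [hF'def]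
      positivity
    have hexp : (1 - u) ^ (-(1/q) - 1) * (1 - u) ^ ((-(1/q)) * (-q - 1)) = 1 := by
      rw [← Real.rpow_add h1u, show (-(1/q) - 1) + (-(1/q)) * (-q - 1) = 0 by field_simp; ring,
        Real.rpow_zero]
    rw [hH, hHq1, hone, smul_eq_mul, abs_of_pos hF'pos, hF'def, hFdef]
    have hcne : c ≠ 0 := hc.ne'
    have hqne : q ≠ 0 := hq0.ne'
    calc c * a * (1/q) * (1 - u) ^ (-(1/q) - 1) *
          ((x₀ + c * a * ((1 - u) ^ (-(1/q)) - 1)) *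
            (q / c * (a ^ (-q - 1) * (1 - u) ^ ((-(1/q)) * (-q - 1))) * u ^ p))
        = (a * a ^ (-q - 1)) *
            ((1 - u) ^ (-(1/q) - 1) * (1 - u) ^ ((-(1/q)) * (-q - 1))) *
            ((x₀ + c * a * ((1 - u) ^ (-(1/q)) - 1)) * u ^ p) * (c⁻¹ * c) * (q⁻¹ * q) := by
          field_simp
      _ = (p + 1) * 1 *
            ((x₀ + c * a * ((1 - u) ^ (-(1/q)) - 1)) * u ^ p) * (c⁻¹ * c) * (q⁻¹ * q) := by
          simp only [ha_q1, hexp]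
      _ = (x₀ - c * a) * (p + 1) * u ^ p
            + (c * a * (p + 1)) * (u ^ p * (1 - u) ^ (-(1/q))) := by
          field_simp
          ring
  -- integrability and known integrals
  have h1q : (0:ℝ) < 1 - 1/q := by
    have : 1/q < 1 := by rw [div_lt_one hq0]; exact hq
    linarith
  have hI2 : IntegrableOn (fun u : ℝ => u ^ p * (1 - u) ^ (-(1/q))) (Ioo 0 1) := by
    have := realBeta_integrableOn (a := p+1) (b := 1 - 1/q) hp1 h1q
    simpa [show p + 1 - 1 = p by ring, show 1 - 1/q - 1 = -(1/q) by ring] using this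
  have hI1 : IntegrableOn (fun u : ℝ => u ^ p) (Ioo 0 1) := by
    have := realBeta_integrableOn (a := p+1) (b := 1) hp1 one_pos
    simpa [show p + 1 - 1 = p by ring] using this
  have hBeta : ∫ u in Ioo (0:ℝ) 1, u ^ p * (1 - u) ^ (-(1/q))
      = Real.Gamma (p+1) * Real.Gamma (1 - 1/q) / Real.Gamma ((p+1) + (1 - 1/q)) := by
    have := realBeta_eq (a := p+1) (b := 1 - 1/q) hp1 h1q
    simpa [show p + 1 - 1 = p by ring, show 1 - 1/q - 1 = -(1/q) by ring] using this
  have hMonoI : ∫ u in Ioo (0:ℝ) 1, u ^ p = 1 / (p+1) := by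
    rw [← integral_Ioc_eq_integral_Ioo,
      ← intervalIntegral.integral_of_le (by norm_num : (0:ℝ) ≤ 1),
      integral_rpow (Or.inl (by linarith : (-1:ℝ) < p)), Real.one_rpow,
      Real.zero_rpow (by linarith : p + 1 ≠ 0)]
    ring
  have hapow : a * (p + 1) = (p + 1) ^ (1 - 1/q) := by
    have h := Real.rpow_add hp1 (-(1/q)) 1
    rw [Real.rpow_one] at h
    rw [show (1 - 1/q : ℝ) = -(1/q) + 1 by ring, h, hadef]
  -- change of variables
  have hchg := integral_image_eq_integral_abs_deriv_smul measurableSet_Ioo hderiv hmono.injOn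
    (fun x => x * ((q / c) * (a + (x - x₀)/c) ^ (-q - 1) *
      (1 - (1 / (p + 1)) * (a + (x - x₀)/c) ^ (-q)) ^ p))
  rw [himg] at hchg
  rw [MeasureTheory.integral_Ici_eq_integral_Ioi, hchg,
    MeasureTheory.setIntegral_congr_fun measurableSet_Ioo (fun u hu => h_point u hu)]
  rw [MeasureTheory.integral_add (hI1.const_mul _) (hI2.const_mul _),
    MeasureTheory.integral_const_mul, MeasureTheory.integral_const_mul, hMonoI, hBeta]
  rw [← hapow, show Real.Gamma (p+1) * Real.Gamma (1-1/q) / Real.Gamma ((p+1)+(1-1/q))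
      = Real.Gamma (1-1/q) * Real.Gamma (p+1) / Real.Gamma ((1-1/q)+(p+1)) by
    rw [add_comm (p+1) (1-1/q), mul_comm (Real.Gamma (p+1)) (Real.Gamma (1-1/q))]]
  field_simp
  ring

/-- If `X` has the IF3 density on `[x₀, ∞)` with `0 < p < ∞` and `q > 1`, then
`E[X] = x₀ + c(p+1)^{1-1/q}(B(1 - 1/q, p+1) - 1/(p+1))`, `B` being the Beta function. -/
theorem IF3_mean (p c q x₀ : ℝ) (hp : 0 < p) (hc : 0 < c) (hq : 1 < q)
    (hx₀ : 0 ≤ x₀) :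
    let H : ℝ → ℝ := fun x => (p + 1) ^ (-(1 / q)) + (x - x₀) / c
    (∫ x in Ici x₀,
        x * ((q / c) * (H x) ^ (-q - 1) * (1 - (1 / (p + 1)) * (H x) ^ (-q)) ^ p))
      = x₀ + c * (p + 1) ^ (1 - 1 / q) *
          (Real.Gamma (1 - 1 / q) * Real.Gamma (p + 1) / Real.Gamma ((1 - 1 / q) + (p + 1))
            - 1 / (p + 1)) := by
  intro H
  exact IF3_aux p c q x₀ hp hc hq hx₀
end
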